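/- Let G be a finite simple graph with vertex set V = {1,…,n}, edge set E, and maximum degree Δ(G), and let d ≥ Δ(G)+1. Then there exists an acyclic orientation O of G such that the labeling s : V → {0,…,d−1} defined by s(i) = δ^O_i (the out-degree of vertex i in O, which is at most Δ(G) ≤ d−1) is simultaneously a proper d-coloring of G (adjacent vertices receive distinct labels, i.e., ε(s) ≠ 0) and a dual d-coloring of G (ε*(s) ≠ 0). In particular, the simultaneous chromatic number of G is at most Δ(G)+1. -/

import Mathlib

open Finset

/-- The edge set of `G`, as ordered pairs `(i, j)` with `i < j`. -/
def edgePairs {n : ℕ} (G : SimpleGraph (Fin n)) [DecidableRel G.Adj] :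
    Finset (Fin n × Fin n) :=
  Finset.univ.filter fun p => p.1 < p.2 ∧ G.Adj p.1 p.2

/-- `ε(c) = ∏_{i<j, {i,j}∈E} (α^{c(i)} - α^{c(j)})`, where `α = exp(2πi/d)`;
`c` is a proper `d`-coloring exactly when `ε(c) ≠ 0`. -/
noncomputable def epsColor {n : ℕ} (d : ℕ) (G : SimpleGraph (Fin n)) [DecidableRel G.Adj]
    (c : Fin n → Fin d) : ℂ :=
  ∏ p ∈ edgePairs G,
    (Complex.exp (2 * Real.pi * Complex.I / d) ^ (c p.1 : ℕ) -
      Complex.exp (2 * Real.pi * Complex.I / d) ^ (c p.2 : ℕ))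

/-- The sign of an orientation `O` (where `O e = true` means the edge `e = (i,j)`, `i < j`,
is directed `i → j`, and `false` means it is flipped). -/
def orientSign {n : ℕ} (G : SimpleGraph (Fin n)) [DecidableRel G.Adj]
    (O : {p : Fin n × Fin n // p ∈ edgePairs G} → Bool) : ℤ :=
  (-1 : ℤ) ^ (Finset.univ.filter fun e : {p : Fin n × Fin n // p ∈ edgePairs G} =>
      O e = false).card

/-- The out-degree of vertex `v` in the orientation `O`. -/
def outDeg {n : ℕ} (G : SimpleGraph (Fin n)) [DecidableRel G.Adj]
    (O : {p : Fin n × Fin n // p ∈ edgePairs G} → Bool) (v : Fin n) : ℕ :=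
  (Finset.univ.filter fun e : {p : Fin n × Fin n // p ∈ edgePairs G} =>
      (O e = true ∧ e.1.1 = v) ∨ (O e = false ∧ e.1.2 = v)).card

/-- `ε*(c*) = ∑ { sign(O) : O an orientation of G with [δ^O] = c* }`;
`c*` is a dual `d`-coloring exactly when `ε*(c*) ≠ 0`. -/
def epsDual {n : ℕ} (d : ℕ) (G : SimpleGraph (Fin n)) [DecidableRel G.Adj]
    (c : Fin n → Fin d) : ℤ :=
  ∑ O ∈ Finset.univ.filter
      (fun O : {p : Fin n × Fin n // p ∈ edgePairs G} → Bool =>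
        ∀ v : Fin n, outDeg G O v % d = (c v : ℕ)),
    orientSign G O

/-- The directed-edge relation of an orientation `O`: `u ⟶ w` if some edge is directed
from `u` to `w`. -/
def orientRel {n : ℕ} (G : SimpleGraph (Fin n)) [DecidableRel G.Adj]
    (O : {p : Fin n × Fin n // p ∈ edgePairs G} → Bool) (u w : Fin n) : Prop :=
  ∃ e : {p : Fin n × Fin n // p ∈ edgePairs G},
    (O e = true ∧ e.1 = (u, w)) ∨ (O e = false ∧ e.1 = (w, u))


namespace SimulAux

variable {n : ℕ} (G : SimpleGraph (Fin n)) [DecidableRel G.Adj]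

lemma lt_of_mem (e : {p : Fin n × Fin n // p ∈ edgePairs G}) : e.1.1 < e.1.2 :=
  ((Finset.mem_filter.mp e.2).2).1

lemma adj_of_mem (e : {p : Fin n × Fin n // p ∈ edgePairs G}) : G.Adj e.1.1 e.1.2 :=
  ((Finset.mem_filter.mp e.2).2).2

/-- tail of a directed edge -/
def tl (O : {p : Fin n × Fin n // p ∈ edgePairs G} → Bool)
    (e : {p : Fin n × Fin n // p ∈ edgePairs G}) : Fin n :=
  if O e = true then e.1.1 else e.1.2

/-- head of a directed edge -/
def hd (O : {p : Fin n × Fin n // p ∈ edgePairs G} → Bool)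
    (e : {p : Fin n × Fin n // p ∈ edgePairs G}) : Fin n :=
  if O e = true then e.1.2 else e.1.1

lemma adj_tl_hd (O) (e) : G.Adj (tl G O e) (hd G O e) := by
  unfold tl hd
  split
  · exact adj_of_mem G e
  · exact (adj_of_mem G e).symm

lemma eq_of_tl_hd (O) (e e' : {p : Fin n × Fin n // p ∈ edgePairs G})
    (h1 : tl G O e = tl G O e') (h2 : hd G O e = hd G O e') : e = e' := by
  have he := lt_of_mem G e
  have he' := lt_of_mem G e'
  simp only [tl, hd] at h1 h2
  apply Subtype.ext
  split_ifs at h1 h2 with a b b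
  · exact Prod.ext h1 h2
  · exfalso; rw [h2] at he; rw [← h1] at he'; exact absurd (he.trans he') (lt_irrefl _)
  · exfalso; rw [h1] at he; rw [← h2] at he'; exact absurd (he.trans he') (lt_irrefl _)
  · exact Prod.ext h2 h1

lemma outDeg_eq (O) (v : Fin n) :
    outDeg G O v = (Finset.univ.filter fun e : {p : Fin n × Fin n // p ∈ edgePairs G} =>
      tl G O e = v).card := by
  unfold outDeg
  congr 1
  apply Finset.filter_congr
  intro e _
  unfold tl
  cases h : O e <;> simp [h]

lemma outDeg_le_degree (O) (v : Fin n) : outDeg G O v ≤ G.degree v := by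
  rw [outDeg_eq, ← SimpleGraph.card_neighborFinset_eq_degree]
  apply Finset.card_le_card_of_injOn (fun e => hd G O e)
  · intro e he
    rw [Finset.mem_coe, Finset.mem_filter] at he
    rw [Finset.mem_coe, SimpleGraph.mem_neighborFinset]
    exact he.2 ▸ adj_tl_hd G O e
  · intro e he e' he' hh
    rw [Finset.coe_filter, Set.mem_setOf_eq] at he he'
    exact eq_of_tl_hd G O e e' (he.2.trans he'.2.symm) hh

lemma exists_good_rank :
    ∀ S : Finset (Fin n), ∃ r : Fin n → ℕ, Set.InjOn r S ∧
      ∀ u ∈ S, ∀ w ∈ S, G.Adj u w →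
        (S.filter fun x => G.Adj u x ∧ r u < r x).card ≠
        (S.filter fun x => G.Adj w x ∧ r w < r x).card := by
  intro S
  induction S using Finset.strongInduction with
  | _ S ih =>
    rcases S.eq_empty_or_nonempty with rfl | hS
    · exact ⟨fun _ => 0, by simp, by simp⟩
    obtain ⟨v, hvS, hvmax⟩ :=
      S.exists_max_image (fun u => (S.filter fun x => G.Adj u x).card) hS
    obtain ⟨r', hr'inj, hr'⟩ := ih (S.erase v) (Finset.erase_ssubset hvS)
    set r : Fin n → ℕ := fun u => if u = v then 0 else r' u + 1 with hrdef
    have hrv : r v = 0 := by simp [hrdef]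
    have hrne : ∀ u, u ≠ v → r u = r' u + 1 := by intro u hu; simp [hrdef, hu]
    -- the count at any u ≠ v agrees with the count in the smaller graph
    have hfe : ∀ u ∈ S.erase v,
        (S.filter fun x => G.Adj u x ∧ r u < r x) =
        ((S.erase v).filter fun x => G.Adj u x ∧ r' u < r' x) := by
      intro u hu
      have huv : u ≠ v := Finset.ne_of_mem_erase hu
      ext x
      simp only [Finset.mem_filter, Finset.mem_erase]
      constructor
      · rintro ⟨hxS, hadj, hlt⟩
        have hxv : x ≠ v := by
          rintro rfl
          rw [hrv, hrne u huv] at hlt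
          omega
        rw [hrne u huv, hrne x hxv] at hlt
        exact ⟨⟨hxv, hxS⟩, hadj, by omega⟩
      · rintro ⟨⟨hxv, hxS⟩, hadj, hlt⟩
        refine ⟨hxS, hadj, ?_⟩
        rw [hrne u huv, hrne x hxv]
        omega
    -- the count at v is its full degree in S
    have hfv : (S.filter fun x => G.Adj v x ∧ r v < r x) = S.filter fun x => G.Adj v x := by
      apply Finset.filter_congr
      intro x hx
      simp only [and_iff_left_iff_imp]
      intro hadj
      rw [hrv, hrne x (G.ne_of_adj hadj).symm]
      omega
    have hcount : ∀ w ∈ S, w ≠ v → G.Adj v w →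
        ((S.filter fun x => G.Adj w x ∧ r w < r x).card <
          (S.filter fun x => G.Adj v x ∧ r v < r x).card) := by
      intro w hw hwv hadj
      rw [hfv, hfe w (Finset.mem_erase.mpr ⟨hwv, hw⟩)]
      have h1 : ((S.erase v).filter fun x => G.Adj w x ∧ r' w < r' x) ⊆
          (S.filter fun x => G.Adj w x).erase v := by
        intro x hx
        simp only [Finset.mem_filter, Finset.mem_erase] at hx ⊢
        exact ⟨hx.1.1, hx.1.2, hx.2.1⟩
      have h2 : v ∈ S.filter fun x => G.Adj w x :=
        Finset.mem_filter.mpr ⟨hvS, hadj.symm⟩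
      calc ((S.erase v).filter fun x => G.Adj w x ∧ r' w < r' x).card
          ≤ ((S.filter fun x => G.Adj w x).erase v).card := Finset.card_le_card h1
        _ < (S.filter fun x => G.Adj w x).card := Finset.card_erase_lt_of_mem h2
        _ ≤ (S.filter fun x => G.Adj v x).card := hvmax w hw
    refine ⟨r, ?_, ?_⟩
    · intro a ha b hb hab
      by_cases hav : a = v <;> by_cases hbv : b = v
      · rw [hav, hbv]
      · subst hav; rw [hrv, hrne b hbv] at hab; exact absurd hab (by omega)
      · subst hbv; rw [hrv, hrne a hav] at hab; exact absurd hab (by omega)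
      · rw [hrne a hav, hrne b hbv] at hab
        exact hr'inj (Finset.mem_coe.mpr (Finset.mem_erase.mpr ⟨hav, Finset.mem_coe.mp ha⟩))
          (Finset.mem_coe.mpr (Finset.mem_erase.mpr ⟨hbv, Finset.mem_coe.mp hb⟩))
          (by omega)
    · intro u hu w hw hadj
      by_cases huv : u = v
      · subst huv
        exact (hcount w hw (G.ne_of_adj hadj).symm hadj).ne'
      by_cases hwv : w = v
      · subst hwv
        exact (hcount u hu huv hadj.symm).ne
      · rw [hfe u (Finset.mem_erase.mpr ⟨huv, hu⟩), hfe w (Finset.mem_erase.mpr ⟨hwv, hw⟩)]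
        exact hr' u (Finset.mem_erase.mpr ⟨huv, hu⟩) w (Finset.mem_erase.mpr ⟨hwv, hw⟩) hadj

section

variable (r : Fin n → ℕ)

/-- orientation of each edge towards larger rank -/
def rOrient : {p : Fin n × Fin n // p ∈ edgePairs G} → Bool :=
  fun e => decide (r e.1.1 < r e.1.2)

lemma r_tl_lt_hd (hr : Function.Injective r) (e) : r (tl G (rOrient G r) e) < r (hd G (rOrient G r) e) := by
  simp only [tl, hd, rOrient]
  by_cases h : decide (r e.1.1 < r e.1.2) = true
  · simp only [h, if_true]; exact of_decide_eq_true h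
  · simp only [h, if_false]
    have h1 : ¬ r e.1.1 < r e.1.2 := fun hh => h (decide_eq_true hh)
    have h2 : r e.1.2 ≠ r e.1.1 := fun hh => (lt_of_mem G e).ne (hr hh).symm
    exact lt_of_le_of_ne (not_lt.mp h1) h2

lemma rel_lt (hr : Function.Injective r) {u w : Fin n} (h : orientRel G (rOrient G r) u w) : r u < r w := by
  obtain ⟨e, ⟨hOe, hpe⟩ | ⟨hOe, hpe⟩⟩ := h
  · have := of_decide_eq_true hOe
    rw [hpe] at this
    exact this
  · have h1 : ¬ r e.1.1 < r e.1.2 := of_decide_eq_false hOe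
    have hlt := lt_of_mem G e
    rw [hpe] at h1 hlt
    dsimp only at h1 hlt
    exact lt_of_le_of_ne (not_lt.mp h1) (fun hh => hlt.ne' (hr hh))

lemma rOrient_acyclic (hr : Function.Injective r) (v : Fin n) : ¬ Relation.TransGen (orientRel G (rOrient G r)) v v := by
  intro h
  have key : ∀ {a b : Fin n}, Relation.TransGen (orientRel G (rOrient G r)) a b → r a < r b := by
    intro a b h
    induction h with
    | single h => exact rel_lt G r hr h
    | tail _ h ih => exact ih.trans (rel_lt G r hr h)
  exact lt_irrefl _ (key h)

lemma outDeg_rOrient (hr : Function.Injective r) (v : Fin n) :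
    outDeg G (rOrient G r) v = (Finset.univ.filter fun x => G.Adj v x ∧ r v < r x).card := by
  rw [outDeg_eq]
  apply Finset.card_bij (fun e _ => hd G (rOrient G r) e)
  · intro e he
    rw [Finset.mem_filter] at he ⊢
    refine ⟨Finset.mem_univ _, he.2 ▸ adj_tl_hd G _ e, he.2 ▸ r_tl_lt_hd G r hr e⟩
  · intro e he e' he' hh
    rw [Finset.mem_filter] at he he'
    exact eq_of_tl_hd G _ e e' (he.2.trans he'.2.symm) hh
  · intro x hx
    rw [Finset.mem_filter] at hx
    obtain ⟨-, hadj, hlt⟩ := hx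
    rcases lt_or_gt_of_ne (G.ne_of_adj hadj) with h | h
    · refine ⟨⟨(v, x), Finset.mem_filter.mpr ⟨Finset.mem_univ _, h, hadj⟩⟩, ?_, ?_⟩
      · rw [Finset.mem_filter]
        refine ⟨Finset.mem_univ _, ?_⟩
        simp only [tl, rOrient]
        simp only [decide_eq_true hlt, if_true]
      · simp only [hd, rOrient]
        simp only [decide_eq_true hlt, if_true]
    · refine ⟨⟨(x, v), Finset.mem_filter.mpr ⟨Finset.mem_univ _, h, hadj.symm⟩⟩, ?_, ?_⟩
      · rw [Finset.mem_filter]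
        refine ⟨Finset.mem_univ _, ?_⟩
        simp only [tl, rOrient]
        simp [asymm hlt]
      · simp only [hd, rOrient]
        simp [asymm hlt]

lemma sum_formula (O : {p : Fin n × Fin n // p ∈ edgePairs G} → Bool) :
    ∑ v : Fin n, r v * outDeg G O v = ∑ e : {p : Fin n × Fin n // p ∈ edgePairs G}, r (tl G O e) := by
  calc ∑ v : Fin n, r v * outDeg G O v
      = ∑ v : Fin n, ∑ _e ∈ Finset.univ.filter
          (fun e : {p : Fin n × Fin n // p ∈ edgePairs G} => tl G O e = v), r v := by
        apply Finset.sum_congr rfl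
        intro v _
        rw [outDeg_eq, Finset.sum_const, smul_eq_mul, mul_comm]
    _ = ∑ e : {p : Fin n × Fin n // p ∈ edgePairs G}, r (tl G O e) :=
        Finset.sum_fiberwise' Finset.univ (tl G O) r

lemma rOrient_unique (hr : Function.Injective r) (O' : {p : Fin n × Fin n // p ∈ edgePairs G} → Bool)
    (h : ∀ v, outDeg G O' v = outDeg G (rOrient G r) v) : O' = rOrient G r := by
  have htl : ∀ e, O' e ≠ rOrient G r e → tl G O' e = hd G (rOrient G r) e := by
    intro e hne
    simp only [tl, hd]
    cases h1 : rOrient G r e <;> cases h2 : O' e <;> simp_all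
  have hsum : ∑ e : {p : Fin n × Fin n // p ∈ edgePairs G}, r (tl G (rOrient G r) e) =
      ∑ e : {p : Fin n × Fin n // p ∈ edgePairs G}, r (tl G O' e) := by
    rw [← sum_formula, ← sum_formula]
    exact Finset.sum_congr rfl fun v _ => by rw [h v]
  have hle : ∀ e ∈ (Finset.univ : Finset {p : Fin n × Fin n // p ∈ edgePairs G}),
      r (tl G (rOrient G r) e) ≤ r (tl G O' e) := by
    intro e _
    by_cases hne : O' e = rOrient G r e
    · simp only [tl, hne]
      exact le_refl _
    · rw [htl e hne]
      exact (r_tl_lt_hd G r hr e).le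
  have heq := (Finset.sum_eq_sum_iff_of_le hle).mp hsum
  funext e
  by_contra hne
  have h2 := heq e (Finset.mem_univ e)
  rw [htl e hne] at h2
  exact absurd h2 (r_tl_lt_hd G r hr e).ne

end

end SimulAux

/-- For every graph `G` and every `d ≥ Δ(G) + 1` there is an acyclic
orientation `O` of `G` whose out-degree vector gives a labeling `s` that is simultaneously
a proper `d`-coloring (`ε(s) ≠ 0`) and a dual `d`-coloring (`ε*(s) ≠ 0`) of `G`.
In particular the simultaneous chromatic number of `G` is at most `Δ(G) + 1`. -/
theorem exists_acyclic_orientation_simultaneous_coloring (n d : ℕ)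
    (G : SimpleGraph (Fin n)) [DecidableRel G.Adj] (hd : G.maxDegree + 1 ≤ d) :
    ∃ (O : {p : Fin n × Fin n // p ∈ edgePairs G} → Bool) (s : Fin n → Fin d),
      (∀ v : Fin n, (s v : ℕ) = outDeg G O v) ∧
      (∀ v : Fin n, ¬ Relation.TransGen (orientRel G O) v v) ∧
      epsColor d G s ≠ 0 ∧
      epsDual d G s ≠ 0 := by
  classical
  obtain ⟨r, hrinj0, hprop⟩ := SimulAux.exists_good_rank G Finset.univ
  have hr : Function.Injective r := fun a b hab => hrinj0 (by simp) (by simp) hab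
  set O := SimulAux.rOrient G r with hO
  have hd0 : d ≠ 0 := by omega
  have hltd : ∀ (O'' : {p : Fin n × Fin n // p ∈ edgePairs G} → Bool) (v : Fin n),
      outDeg G O'' v < d :=
    fun O'' v => lt_of_le_of_lt (le_trans (SimulAux.outDeg_le_degree G O'' v)
      (G.degree_le_maxDegree v)) (by omega)
  refine ⟨O, fun v => ⟨outDeg G O v, hltd O v⟩, fun v => rfl,
    SimulAux.rOrient_acyclic G r hr, ?_, ?_⟩
  · rw [epsColor]
    rw [Finset.prod_ne_zero_iff]
    intro p hp
    obtain ⟨-, hplt, hadj⟩ := Finset.mem_filter.mp hp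
    apply sub_ne_zero_of_ne
    intro hEq
    have hinj := (Complex.isPrimitiveRoot_exp d hd0).pow_inj (hltd O p.1) (hltd O p.2) hEq
    rw [SimulAux.outDeg_rOrient G r hr p.1, SimulAux.outDeg_rOrient G r hr p.2] at hinj
    exact hprop p.1 (Finset.mem_univ _) p.2 (Finset.mem_univ _) hadj hinj
  · rw [epsDual]
    have hset : (Finset.univ.filter fun O' : {p : Fin n × Fin n // p ∈ edgePairs G} → Bool =>
        ∀ v : Fin n, outDeg G O' v % d =
          (((fun v => (⟨outDeg G O v, hltd O v⟩ : Fin d)) v : Fin d) : ℕ)) = {O} := by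
      ext O'
      simp only [Finset.mem_filter, Finset.mem_univ, true_and, Finset.mem_singleton]
      constructor
      · intro hO'
        apply SimulAux.rOrient_unique G r hr
        intro v
        have h1 := hO' v
        rwa [Nat.mod_eq_of_lt (hltd O' v)] at h1
      · rintro rfl
        intro v
        exact Nat.mod_eq_of_lt (hltd O v)
    rw [hset, Finset.sum_singleton, orientSign]
    exact pow_ne_zero _ (by norm_num)
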